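/- Let T be a bounded operator on a Hilbert space. If a bounded operator P satisfies both TP = PT and P = TY − YT for some bounded operator Y (i.e., P ∈ ker τ_T ∩ ran τ_T), then P is quasi-nilpotent: lim_{n→∞} ‖P^n‖^{1/n} = 0. -/

import Mathlib

open Filter

section aux

variable {A : Type*} [NormedRing A]

private lemma D_iter_bound (T : A) (n : ℕ) (X : A) :
    ‖(fun X => T * X - X * T)^[n] X‖ ≤ (2 * ‖T‖) ^ n * ‖X‖ := by
  induction n generalizing X with
  | zero => simp
  | succ n ih =>
    rw [Function.iterate_succ_apply]
    calc ‖(fun X => T * X - X * T)^[n] (T * X - X * T)‖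
        ≤ (2 * ‖T‖) ^ n * ‖T * X - X * T‖ := ih _
      _ ≤ (2 * ‖T‖) ^ n * (2 * ‖T‖ * ‖X‖) := by
          apply mul_le_mul_of_nonneg_left _ (by positivity)
          calc ‖T * X - X * T‖ ≤ ‖T * X‖ + ‖X * T‖ := norm_sub_le _ _
            _ ≤ ‖T‖ * ‖X‖ + ‖X‖ * ‖T‖ := add_le_add (norm_mul_le _ _) (norm_mul_le _ _)
            _ = 2 * ‖T‖ * ‖X‖ := by ring
      _ = (2 * ‖T‖) ^ (n + 1) * ‖X‖ := by ring

private lemma D_key (T P Y : A) (h1 : T * P = P * T) (h2 : P = T * Y - Y * T) (n : ℕ) :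
    (fun X => T * X - X * T)^[n] (Y ^ n) = n.factorial • P ^ n ∧
    (fun X => T * X - X * T)^[n + 1] (Y ^ n) = 0 := by
  set D : A → A := fun X => T * X - X * T with hD
  have hDP : ∀ Z : A, D (P * Z) = P * D Z := by
    intro Z
    simp only [hD]
    rw [← mul_assoc, h1]
    noncomm_ring
  have hDY : ∀ Z : A, D (Y * Z) = P * Z + Y * D Z := by
    intro Z
    simp only [hD, h2]
    noncomm_ring
  have hDadd : ∀ X Z : A, D (X + Z) = D X + D Z := by intro X Z; simp only [hD]; noncomm_ring
  have hD0 : D 0 = 0 := by simp [hD]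
  have hDsmul : ∀ (k : ℕ) (X : A), D (k • X) = k • D X := by
    intro k X; simp only [hD, smul_sub, mul_smul_comm, smul_mul_assoc]
  -- key recurrence : D^[m+1] (Y * X) = Y * D^[m+1] X + (m+1) • (P * D^[m] X)
  have hrec : ∀ (m : ℕ) (X : A),
      D^[m + 1] (Y * X) = Y * D^[m + 1] X + (m + 1) • (P * D^[m] X) := by
    intro m
    induction m with
    | zero => intro X; simpa [add_comm] using hDY X
    | succ m ih =>
      have hadd_iter : ∀ (k : ℕ) (X Z : A), D^[k] (X + Z) = D^[k] X + D^[k] Z := by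
        intro k
        induction k with
        | zero => intro X Z; simp
        | succ k ihk =>
          intro X Z
          rw [Function.iterate_succ_apply, hDadd, ihk, Function.iterate_succ_apply,
            Function.iterate_succ_apply D k Z]
      have hP_iter : ∀ (k : ℕ) (Z : A), D^[k] (P * Z) = P * D^[k] Z := by
        intro k
        induction k with
        | zero => intro Z; simp
        | succ k ihk =>
          intro Z
          rw [Function.iterate_succ_apply, hDP, ihk, Function.iterate_succ_apply D k Z]
      intro X
      rw [Function.iterate_succ_apply, hDY X, hadd_iter, hP_iter, ih (D X),
        ← Function.iterate_succ_apply D (m+1) X, ← Function.iterate_succ_apply D m X]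
      rw [succ_nsmul (P * D^[m+1] X) (m+1)]
      abel
  induction n with
  | zero =>
    constructor
    · simp
    · simp [hD]
  | succ n ih =>
    have hzero : D^[n + 2] (Y ^ n) = 0 := by
      rw [Function.iterate_succ_apply' D (n+1), ih.2, hD0]
    constructor
    · rw [pow_succ' Y n, hrec n (Y ^ n), ih.2, mul_zero, zero_add, ih.1,
        mul_smul_comm, smul_smul, ← pow_succ' P n, Nat.factorial_succ]
    · rw [pow_succ' Y n, hrec (n + 1) (Y ^ n), hzero, mul_zero,
        ih.2, mul_zero, smul_zero, add_zero]

end aux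

/-- **Kleinecke–Shirokov.** If a bounded operator `P` on a Hilbert space
commutes with `T` and `P = T Y − Y T` for some bounded `Y`, then `P` is quasi-nilpotent:
`‖P^n‖^{1/n} → 0`. -/
theorem stmt3 {H : Type*} [NormedAddCommGroup H] [InnerProductSpace ℂ H] [CompleteSpace H]
    (T P Y : H →L[ℂ] H) (h1 : T * P = P * T) (h2 : P = T * Y - Y * T) :
    Filter.Tendsto (fun n : ℕ => ‖P ^ n‖ ^ ((n : ℝ)⁻¹)) Filter.atTop (nhds 0) := by
  set c : ℝ := 2 * ‖T‖ * ‖Y‖ with hc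
  have hbound : ∀ n : ℕ, (n.factorial : ℝ) * ‖P ^ n‖ ≤ c ^ n := by
    intro n
    have h := (D_key T P Y h1 h2 n).1
    have h2' : ‖(fun X => T * X - X * T)^[n] (Y ^ n)‖ ≤ (2 * ‖T‖) ^ n * ‖Y ^ n‖ :=
      D_iter_bound T n (Y ^ n)
    rw [h] at h2'
    rw [← Nat.cast_smul_eq_nsmul ℝ, norm_smul] at h2'
    simp only [Real.norm_natCast] at h2'
    calc (n.factorial : ℝ) * ‖P ^ n‖ ≤ (2 * ‖T‖) ^ n * ‖Y ^ n‖ := h2'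
      _ ≤ (2 * ‖T‖) ^ n * ‖Y‖ ^ n := by
          rcases Nat.eq_zero_or_pos n with rfl | hn
          · simpa using (show ‖(1 : H →L[ℂ] H)‖ ≤ 1 from ContinuousLinearMap.norm_id_le)
          · exact mul_le_mul_of_nonneg_left (norm_pow_le' _ hn) (by positivity)
      _ = c ^ n := by rw [hc]; ring
  rcases eq_or_lt_of_le (norm_nonneg P) with hP | hP
  · -- trivial case ‖P‖ = 0, i.e. P = 0
    have hP0 : P = 0 := by rwa [eq_comm, norm_eq_zero] at hP
    have : ∀ᶠ n : ℕ in atTop, ‖P ^ n‖ ^ ((n : ℝ)⁻¹) = 0 := by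
      filter_upwards [eventually_ne_atTop 0] with n hn
      rw [hP0, zero_pow hn, norm_zero, Real.zero_rpow (by positivity)]
    exact tendsto_const_nhds.congr' (this.mono fun n h => h.symm)
  · refine tendsto_order.mpr ⟨fun a ha => ?_, fun a ha => ?_⟩
    · filter_upwards with n
      exact lt_of_lt_of_le ha (Real.rpow_nonneg (norm_nonneg _) _)
    · -- show eventually ‖P^n‖^(1/n) < a
      have hc0 : 0 ≤ c := by positivity
      have htend : Tendsto (fun n : ℕ => (c / (a / 2)) ^ n / (n.factorial : ℝ)) atTop (nhds 0) :=
        FloorSemiring.tendsto_pow_div_factorial_atTop _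
      have ha2 : 0 < a / 2 := by linarith
      filter_upwards [htend.eventually (gt_mem_nhds one_pos), eventually_ge_atTop 1]
        with n hn hn1
      have hfac : (0 : ℝ) < n.factorial := by exact_mod_cast n.factorial_pos
      have hPn : ‖P ^ n‖ ≤ (a / 2) ^ n := by
        have h1' : c ^ n < (a / 2) ^ n * (n.factorial : ℝ) := by
          rw [div_lt_one hfac] at hn
          rw [div_pow, div_lt_iff₀ (by positivity)] at hn
          linarith [hn]
        have := hbound n
        nlinarith [norm_nonneg (P ^ n), pow_pos ha2 n]
      have : ‖P ^ n‖ ^ ((n : ℝ)⁻¹) ≤ ((a / 2) ^ n) ^ ((n : ℝ)⁻¹) :=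
        Real.rpow_le_rpow (norm_nonneg _) hPn (by positivity)
      have heq : ((a / 2) ^ n) ^ ((n : ℝ)⁻¹) = a / 2 := by
        rw [← Real.rpow_natCast (a / 2) n, ← Real.rpow_mul ha2.le,
          mul_inv_cancel₀ (by exact_mod_cast Nat.one_le_iff_ne_zero.mp hn1), Real.rpow_one]
      rw [heq] at this
      linarith
  done
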